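/- Let U, V ⊆ ℝ² be transverse sets, let μ > 0, and let K₁, K₂ : ℤ² × ℤ² → ℝ be nonnegative functions such that K₁(x,y) ≤ μ⁻¹ exp(−μ(‖x−y‖ + d(x,∂U) + d(y,∂U))) and K₂(x,y) ≤ μ⁻¹ exp(−μ(‖x−y‖ + d(x,∂V) + d(y,∂V))) for all x, y ∈ ℤ². Then the family (x, z, y) ↦ K₁(x,z) · K₂(z,y) is summable over ℤ² × ℤ² × ℤ². (This is the kernel-level statement that the product of the two commutator kernels [Λ_U, P] and [Λ_V, P] is of trace class.) -/
import Mathlib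


open Metric Set

noncomputable section

/-- The canonical embedding of `ℤ²` into the Euclidean plane. -/
def emb (p : ℤ × ℤ) : EuclideanSpace ℝ (Fin 2) :=
  (WithLp.equiv 2 (Fin 2 → ℝ)).symm ![(p.1 : ℝ), (p.2 : ℝ)]

/-- Two subsets of the plane are transverse if `Ψ_{U,V}(x) = 1 + d(x,∂U) + d(x,∂V)`
grows at least like a positive power of `‖x‖`. -/
def Transverse (U V : Set (EuclideanSpace ℝ (Fin 2))) : Prop :=
  ∃ c : ℝ, 0 < c ∧ ∃ ρ : ℝ, 0 < ρ ∧ ∀ x : EuclideanSpace ℝ (Fin 2), ρ ≤ ‖x‖ →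
    ‖x‖ ^ c ≤ 1 + infDist x (frontier U) + infDist x (frontier V)

open Real Filter Asymptotics

lemma emb_sub (p q : ℤ × ℤ) : emb p - emb q = emb (p - q) := by
  ext i
  fin_cases i <;> simp [emb]

lemma norm_emb (p : ℤ × ℤ) :
    (|(p.1 : ℝ)| + |(p.2 : ℝ)|) / 2 ≤ ‖emb p‖ ∧ |(p.1 : ℝ)| ≤ ‖emb p‖ ∧ |(p.2 : ℝ)| ≤ ‖emb p‖ := by
  have h : ‖emb p‖ = Real.sqrt ((p.1 : ℝ) ^ 2 + (p.2 : ℝ) ^ 2) := by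
    rw [EuclideanSpace.norm_eq]
    congr 1
    simp [emb, Fin.sum_univ_two, sq_abs]
  refine ⟨?_, ?_, ?_⟩ <;> rw [h] <;>
  · nlinarith [Real.sq_sqrt (show (0:ℝ) ≤ (p.1:ℝ)^2+(p.2:ℝ)^2 by positivity),
      Real.sqrt_nonneg ((p.1:ℝ)^2+(p.2:ℝ)^2), sq_abs ((p.1:ℝ)), sq_abs ((p.2:ℝ)),
      sq_nonneg (|(p.1:ℝ)| - |(p.2:ℝ)|), abs_nonneg ((p.1:ℝ)), abs_nonneg ((p.2:ℝ)),
      sq_nonneg (Real.sqrt ((p.1:ℝ)^2+(p.2:ℝ)^2) - |(p.1:ℝ)|),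
      sq_nonneg (Real.sqrt ((p.1:ℝ)^2+(p.2:ℝ)^2) - |(p.2:ℝ)|)]

lemma aux_nat {a c : ℝ} (ha : 0 < a) (hc : 0 < c) :
    Summable fun n : ℕ => Real.exp (-(a * (n : ℝ) ^ c)) := by
  have h0 : Tendsto (fun n : ℕ => (n : ℝ) ^ c) atTop atTop :=
    (tendsto_rpow_atTop hc).comp tendsto_natCast_atTop_atTop
  have h1 := tendsto_rpow_mul_exp_neg_mul_atTop_nhds_zero (2 / c) a ha
  have h2 : Tendsto (fun n : ℕ => (n : ℝ) ^ (2 : ℝ) * Real.exp (-(a * (n : ℝ) ^ c)))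
      atTop (nhds 0) := by
    refine (h1.comp h0).congr' ?_
    filter_upwards [eventually_ge_atTop 1] with n hn
    have hn' : (0:ℝ) ≤ (n:ℝ) := Nat.cast_nonneg n
    have : ((n:ℝ) ^ c) ^ (2 / c) = (n:ℝ) ^ (2:ℝ) := by
      rw [← Real.rpow_mul hn']
      congr 1
      field_simp
    simp only [Function.comp, this, neg_mul]
  have hlo : (fun n : ℕ => Real.exp (-(a * (n : ℝ) ^ c))) =o[atTop]
      fun n : ℕ => (n : ℝ) ^ (-(2:ℝ)) := by
    refine isLittleO_of_tendsto' ?_ ?_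
    · filter_upwards [eventually_ge_atTop 1] with n hn h
      have : (0:ℝ) < (n:ℝ) ^ (-(2:ℝ)) :=
        Real.rpow_pos_of_pos (by exact_mod_cast Nat.lt_of_lt_of_le Nat.zero_lt_one hn) _
      exact absurd h this.ne'
    · refine h2.congr' ?_
      filter_upwards [eventually_ge_atTop 1] with n hn
      have hn0 : (0:ℝ) < (n:ℝ) := by exact_mod_cast Nat.lt_of_lt_of_le Nat.zero_lt_one hn
      rw [Real.rpow_neg hn0.le, div_eq_mul_inv, inv_inv, mul_comm]
  exact summable_of_isBigO_nat (Real.summable_nat_rpow.mpr (by norm_num)) hlo.isBigO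

lemma aux_int {a c : ℝ} (ha : 0 < a) (hc : 0 < c) :
    Summable fun n : ℤ => Real.exp (-(a * |(n : ℝ)| ^ c)) := by
  have h := aux_nat ha hc
  refine Summable.of_nat_of_neg ?_ ?_ <;>
  · refine h.congr fun n => ?_
    simp [Nat.abs_cast]

lemma aux_prod {a c : ℝ} (ha : 0 < a) (hc : 0 < c) :
    Summable fun p : ℤ × ℤ =>
      Real.exp (-(a * |(p.1 : ℝ)| ^ c)) * Real.exp (-(a * |(p.2 : ℝ)| ^ c)) :=
  (aux_int ha hc).mul_of_nonneg (aux_int ha hc)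
    (fun _ => Real.exp_nonneg _) (fun _ => Real.exp_nonneg _)

lemma pow_quarter {c : ℝ} (hc0 : 0 < c) (hc1 : c ≤ 1) {s t : ℝ} (hs : 0 ≤ s) (ht : 0 ≤ t) :
    (s ^ c + t ^ c) / 4 ≤ ((s + t) / 2) ^ c := by
  set m := max s t with hm
  have hm0 : 0 ≤ m := le_trans hs (le_max_left _ _)
  have h1 : s ^ c + t ^ c ≤ 2 * m ^ c := by
    have := Real.rpow_le_rpow hs (le_max_left s t) hc0.le
    have := Real.rpow_le_rpow ht (le_max_right s t) hc0.le
    linarith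
  have h2 : (2:ℝ) ^ c ≤ 2 := by
    calc (2:ℝ) ^ c ≤ (2:ℝ) ^ (1:ℝ) := Real.rpow_le_rpow_of_exponent_le one_le_two hc1
    _ = 2 := Real.rpow_one 2
  have h3 : m ^ c / 2 ≤ (m / 2) ^ c := by
    rw [Real.div_rpow hm0 (by norm_num : (0:ℝ) ≤ 2)]
    exact div_le_div_of_nonneg_left (Real.rpow_nonneg hm0 c)
      (Real.rpow_pos_of_pos two_pos c) h2
  have h4 : (m / 2) ^ c ≤ ((s + t) / 2) ^ c := by
    apply Real.rpow_le_rpow (by positivity) ?_ hc0.le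
    have : m ≤ s + t := by
      rcases max_cases s t with ⟨h, _⟩ | ⟨h, _⟩ <;> rw [hm, h] <;> linarith
    linarith
  linarith

set_option maxHeartbeats 2000000 in
theorem double_commutator_trace_class (U V : Set (EuclideanSpace ℝ (Fin 2)))
    (hUV : Transverse U V) (μ : ℝ) (hμ : 0 < μ)
    (K₁ K₂ : ℤ × ℤ → ℤ × ℤ → ℝ)
    (hK₁pos : ∀ x y, 0 ≤ K₁ x y) (hK₂pos : ∀ x y, 0 ≤ K₂ x y)
    (hK₁ : ∀ x y : ℤ × ℤ, K₁ x y ≤ μ⁻¹ * Real.exp (-μ * (‖emb x - emb y‖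
      + infDist (emb x) (frontier U) + infDist (emb y) (frontier U))))
    (hK₂ : ∀ x y : ℤ × ℤ, K₂ x y ≤ μ⁻¹ * Real.exp (-μ * (‖emb x - emb y‖
      + infDist (emb x) (frontier V) + infDist (emb y) (frontier V)))) :
    Summable (fun p : (ℤ × ℤ) × (ℤ × ℤ) × (ℤ × ℤ) =>
      K₁ p.1 p.2.1 * K₂ p.2.1 p.2.2) := by
  obtain ⟨c₀, hc₀, ρ₀, hρ₀, hT₀⟩ := hUV
  set c := min c₀ 1 with hcdef
  set ρ := max ρ₀ 1 with hρdef
  have hc : 0 < c := lt_min hc₀ one_pos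
  have hc1 : c ≤ 1 := min_le_right _ _
  have hρ1 : 1 ≤ ρ := le_max_right _ _
  have hT : ∀ x : EuclideanSpace ℝ (Fin 2), ρ ≤ ‖x‖ →
      ‖x‖ ^ c ≤ 1 + infDist x (frontier U) + infDist x (frontier V) := by
    intro x hx
    have h1 : (1:ℝ) ≤ ‖x‖ := le_trans hρ1 hx
    calc ‖x‖ ^ c ≤ ‖x‖ ^ c₀ := Real.rpow_le_rpow_of_exponent_le h1 (min_le_left _ _)
    _ ≤ _ := hT₀ x (le_trans (le_max_left _ _) hx)
  -- key exponent estimate at the middle point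
  have hW : ∀ z : ℤ × ℤ, μ/4 * |(z.1:ℝ)| ^ c + μ/4 * |(z.2:ℝ)| ^ c
      ≤ μ * (1 + ρ) + μ * infDist (emb z) (frontier U) + μ * infDist (emb z) (frontier V) := by
    intro z
    have hdU : 0 ≤ infDist (emb z) (frontier U) := infDist_nonneg
    have hdV : 0 ≤ infDist (emb z) (frontier V) := infDist_nonneg
    rcases le_or_gt ρ ‖emb z‖ with h | h
    · have key : (|(z.1:ℝ)| ^ c + |(z.2:ℝ)| ^ c) / 4
          ≤ 1 + infDist (emb z) (frontier U) + infDist (emb z) (frontier V) := by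
        calc (|(z.1:ℝ)| ^ c + |(z.2:ℝ)| ^ c) / 4
            ≤ ((|(z.1:ℝ)| + |(z.2:ℝ)|) / 2) ^ c :=
              pow_quarter hc hc1 (abs_nonneg _) (abs_nonneg _)
        _ ≤ ‖emb z‖ ^ c := Real.rpow_le_rpow (by positivity) (norm_emb z).1 hc.le
        _ ≤ _ := hT _ h
      nlinarith [mul_le_mul_of_nonneg_left key hμ.le,
        mul_nonneg hμ.le (le_trans zero_le_one hρ1)]
    · have hb1 : |(z.1:ℝ)| ^ c ≤ ρ := by
        calc |(z.1:ℝ)| ^ c ≤ ρ ^ c :=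
              Real.rpow_le_rpow (abs_nonneg _) (le_of_lt (lt_of_le_of_lt (norm_emb z).2.1 h)) hc.le
        _ ≤ ρ ^ (1:ℝ) := Real.rpow_le_rpow_of_exponent_le hρ1 hc1
        _ = ρ := Real.rpow_one ρ
      have hb2 : |(z.2:ℝ)| ^ c ≤ ρ := by
        calc |(z.2:ℝ)| ^ c ≤ ρ ^ c :=
              Real.rpow_le_rpow (abs_nonneg _) (le_of_lt (lt_of_le_of_lt (norm_emb z).2.2 h)) hc.le
        _ ≤ ρ ^ (1:ℝ) := Real.rpow_le_rpow_of_exponent_le hρ1 hc1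
        _ = ρ := Real.rpow_one ρ
      nlinarith [mul_le_mul_of_nonneg_left hb1 (by positivity : (0:ℝ) ≤ μ/4),
        mul_le_mul_of_nonneg_left hb2 (by positivity : (0:ℝ) ≤ μ/4),
        mul_nonneg hμ.le hdU, mul_nonneg hμ.le hdV]
  -- summability of the comparison kernel
  have hA : Summable fun w : ℤ × ℤ => Real.exp (-(μ * ‖emb w‖)) := by
    have hp := aux_prod (show (0:ℝ) < μ/2 by linarith) one_pos
    simp only [Real.rpow_one] at hp
    refine Summable.of_nonneg_of_le (fun _ => Real.exp_nonneg _) (fun w => ?_) hp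
    rw [← Real.exp_add]
    apply Real.exp_le_exp.mpr
    have := (norm_emb w).1
    nlinarith
  have hWs : Summable fun z : ℤ × ℤ =>
      Real.exp (-(μ/4 * |(z.1:ℝ)| ^ c)) * Real.exp (-(μ/4 * |(z.2:ℝ)| ^ c)) :=
    aux_prod (by linarith) hc
  have hH : Summable fun q : (ℤ × ℤ) × (ℤ × ℤ) × (ℤ × ℤ) =>
      Real.exp (-(μ * ‖emb q.1‖)) *
        ((Real.exp (-(μ/4 * |(q.2.1.1:ℝ)| ^ c)) * Real.exp (-(μ/4 * |(q.2.1.2:ℝ)| ^ c))) *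
          Real.exp (-(μ * ‖emb q.2.2‖))) :=
    hA.mul_of_nonneg
      (hWs.mul_of_nonneg hA (fun _ => by positivity) (fun _ => Real.exp_nonneg _))
      (fun _ => Real.exp_nonneg _) (fun _ => by positivity)
  have hinj : Function.Injective
      (fun p : (ℤ × ℤ) × (ℤ × ℤ) × (ℤ × ℤ) => (p.1 - p.2.1, p.2.1, p.2.1 - p.2.2)) := by
    rintro ⟨x1, z1, y1⟩ ⟨x2, z2, y2⟩ h
    simp only [Prod.mk.injEq] at h
    obtain ⟨h1, h2, h3⟩ := h
    subst h2
    have hx : x1 = x2 := by rwa [sub_left_inj] at h1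
    have hy : y1 = y2 := by rwa [sub_right_inj] at h3
    simp [hx, hy]
  have hG : Summable fun p : (ℤ × ℤ) × (ℤ × ℤ) × (ℤ × ℤ) =>
      Real.exp (-(μ * ‖emb (p.1 - p.2.1)‖)) *
        ((Real.exp (-(μ/4 * |(p.2.1.1:ℝ)| ^ c)) * Real.exp (-(μ/4 * |(p.2.1.2:ℝ)| ^ c))) *
          Real.exp (-(μ * ‖emb (p.2.1 - p.2.2)‖))) := by
    have h := hH.comp_injective hinj
    simpa only [Function.comp_def] using h
  refine Summable.of_nonneg_of_le
    (fun p => mul_nonneg (hK₁pos _ _) (hK₂pos _ _)) (fun p => ?_)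
    (hG.mul_left (μ⁻¹ * μ⁻¹ * Real.exp (μ * (1 + ρ))))
  obtain ⟨x, z, y⟩ := p
  simp only
  have b1 : K₁ x z ≤ μ⁻¹ * Real.exp (-(μ * ‖emb x - emb z‖)
      + -(μ * infDist (emb z) (frontier U))) := by
    refine (hK₁ x z).trans ?_
    refine mul_le_mul_of_nonneg_left (Real.exp_le_exp.mpr ?_) (inv_nonneg.mpr hμ.le)
    nlinarith [mul_nonneg hμ.le (infDist_nonneg (x := emb x) (s := frontier U))]
  have b2 : K₂ z y ≤ μ⁻¹ * Real.exp (-(μ * ‖emb z - emb y‖)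
      + -(μ * infDist (emb z) (frontier V))) := by
    refine (hK₂ z y).trans ?_
    refine mul_le_mul_of_nonneg_left (Real.exp_le_exp.mpr ?_) (inv_nonneg.mpr hμ.le)
    nlinarith [mul_nonneg hμ.le (infDist_nonneg (x := emb y) (s := frontier V))]
  calc K₁ x z * K₂ z y
      ≤ (μ⁻¹ * Real.exp (-(μ * ‖emb x - emb z‖) + -(μ * infDist (emb z) (frontier U)))) *
        (μ⁻¹ * Real.exp (-(μ * ‖emb z - emb y‖) + -(μ * infDist (emb z) (frontier V)))) :=
      mul_le_mul b1 b2 (hK₂pos _ _) (by positivity)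
  _ = μ⁻¹ * μ⁻¹ * Real.exp ((-(μ * ‖emb x - emb z‖) + -(μ * infDist (emb z) (frontier U)))
        + (-(μ * ‖emb z - emb y‖) + -(μ * infDist (emb z) (frontier V)))) := by
      rw [Real.exp_add (-(μ * ‖emb x - emb z‖) + -(μ * infDist (emb z) (frontier U)))]
      rw [Real.exp_add, Real.exp_add]; ring
  _ ≤ μ⁻¹ * μ⁻¹ * Real.exp (μ * (1 + ρ) + (-(μ * ‖emb x - emb z‖)
        + ((-(μ/4 * |(z.1:ℝ)| ^ c) + -(μ/4 * |(z.2:ℝ)| ^ c)) + -(μ * ‖emb z - emb y‖)))) := by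
      refine mul_le_mul_of_nonneg_left (Real.exp_le_exp.mpr ?_) (by positivity)
      linarith [hW z]
  _ = μ⁻¹ * μ⁻¹ * Real.exp (μ * (1 + ρ)) *
        (Real.exp (-(μ * ‖emb (x - z)‖)) *
          ((Real.exp (-(μ/4 * |(z.1:ℝ)| ^ c)) * Real.exp (-(μ/4 * |(z.2:ℝ)| ^ c))) *
            Real.exp (-(μ * ‖emb (z - y)‖)))) := by
      rw [← emb_sub, ← emb_sub]
      simp only [Real.exp_add]
      ring
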